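/- Fix ℓ ∈ (1/2)ℤ₊ with ℓ ≥ 1/2, W = ℂ^{I×I} as above with operators D₋ e_{mn} = -√((ℓ+n)(ℓ-n+1)) e_{m,n-1} and D₀ e_{mn} = n e_{mn}. Define d'₀ : W → W², d'₀(u) = (D₋ u, D₀ u), and d'₁ : W² → W, d'₁(u₁,u₂) = D₋ u₂ - D₀ u₁ - u₁. Then d'₁ ∘ d'₀ = 0, d'₀ is injective, d'₁ is surjective, and ker d'₁ = range d'₀; hence the quotient ker d'₁ / range d'₀ is zero. -/

import Mathlib

open Matrix

/-- `L = 2ℓ`; the pair `(m, j)` with `j : Fin (L+1)` encodes the half-integers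
`(m, n)` with `n = -ℓ + j`.  `D₋ e_{mn} = -√((ℓ+n)(ℓ-n+1)) e_{m,n-1}`. -/
noncomputable def DmW (L : ℕ) :
    ((Fin (L+1) × Fin (L+1)) → ℂ) →ₗ[ℂ] ((Fin (L+1) × Fin (L+1)) → ℂ) :=
  Matrix.toLin' (fun r c : Fin (L+1) × Fin (L+1) =>
    if r.1 = c.1 ∧ (r.2 : ℕ) + 1 = (c.2 : ℕ) then
      -(Real.sqrt ((c.2 : ℕ) * ((L : ℝ) - (c.2 : ℕ) + 1)) : ℂ) else 0)

/-- `D₀ e_{mn} = n e_{mn}`. -/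
noncomputable def D0W (L : ℕ) :
    ((Fin (L+1) × Fin (L+1)) → ℂ) →ₗ[ℂ] ((Fin (L+1) × Fin (L+1)) → ℂ) :=
  Matrix.toLin' (Matrix.diagonal fun p : Fin (L+1) × Fin (L+1) => -(L : ℂ)/2 + (p.2 : ℕ))

noncomputable def dfun (L : ℕ) (p : Fin (L+1) × Fin (L+1)) : ℂ := -(L : ℂ)/2 + (p.2 : ℕ)

lemma dfun_ne (L : ℕ) (hL : Odd L) (p : Fin (L+1) × Fin (L+1)) : dfun L p ≠ 0 := by
  unfold dfun
  intro h
  have h2 : (L : ℂ) = 2 * (p.2 : ℕ) := by linear_combination -2 * h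
  have : (L : ℕ) = 2 * (p.2 : ℕ) := by exact_mod_cast h2
  exact (Nat.not_even_iff_odd.mpr hL) ⟨(p.2 : ℕ), by omega⟩

lemma dfun1_ne (L : ℕ) (hL : Odd L) (p : Fin (L+1) × Fin (L+1)) : dfun L p + 1 ≠ 0 := by
  unfold dfun
  intro h
  have h2 : (L : ℂ) = 2 * (p.2 : ℕ) + 2 := by linear_combination -2 * h
  have : (L : ℕ) = 2 * (p.2 : ℕ) + 2 := by exact_mod_cast h2
  exact (Nat.not_even_iff_odd.mpr hL) ⟨(p.2 : ℕ) + 1, by omega⟩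

-- inverses
noncomputable def EW (L : ℕ) := Matrix.toLin'
  (Matrix.diagonal fun p : Fin (L+1) × Fin (L+1) => (dfun L p)⁻¹)
noncomputable def FW (L : ℕ) := Matrix.toLin'
  (Matrix.diagonal fun p : Fin (L+1) × Fin (L+1) => (dfun L p + 1)⁻¹)

lemma D0W_eq (L : ℕ) : D0W L = Matrix.toLin' (Matrix.diagonal (dfun L)) := rfl

lemma D0W_add_id (L : ℕ) :
    D0W L + LinearMap.id = Matrix.toLin' (Matrix.diagonal fun p => dfun L p + 1) := by
  rw [D0W_eq, ← Matrix.toLin'_one, ← map_add]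
  congr 1
  rw [← Matrix.diagonal_one, Matrix.diagonal_add]

lemma diag_inv_comp {ι : Type*} [Fintype ι] [DecidableEq ι] (d : ι → ℂ)
    (hd : ∀ i, d i ≠ 0) :
    Matrix.toLin' (Matrix.diagonal fun i => (d i)⁻¹) ∘ₗ Matrix.toLin' (Matrix.diagonal d)
      = LinearMap.id ∧
    Matrix.toLin' (Matrix.diagonal d) ∘ₗ Matrix.toLin' (Matrix.diagonal fun i => (d i)⁻¹)
      = LinearMap.id := by
  have h1 : (fun i => (d i)⁻¹ * d i) = fun _ => (1:ℂ) := funext fun i => inv_mul_cancel₀ (hd i)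
  have h2 : (fun i => d i * (d i)⁻¹) = fun _ => (1:ℂ) := funext fun i => mul_inv_cancel₀ (hd i)
  constructor
  · rw [← Matrix.toLin'_mul, Matrix.diagonal_mul_diagonal, h1, Matrix.diagonal_one,
      Matrix.toLin'_one]
  · rw [← Matrix.toLin'_mul, Matrix.diagonal_mul_diagonal, h2, Matrix.diagonal_one,
      Matrix.toLin'_one]

lemma commDm (L : ℕ) : DmW L ∘ₗ D0W L = (D0W L + LinearMap.id) ∘ₗ DmW L := by
  rw [D0W_add_id, D0W_eq]
  unfold DmW
  erw [← Matrix.toLin'_mul, ← Matrix.toLin'_mul]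
  congr 1
  ext r c
  erw [Matrix.mul_diagonal, Matrix.diagonal_mul]
  by_cases h : r.1 = c.1 ∧ (r.2 : ℕ) + 1 = (c.2 : ℕ)
  · simp only [h, if_true]
    have : (dfun L c) = dfun L r + 1 := by
      unfold dfun
      have : ((c.2 : ℕ) : ℂ) = ((r.2 : ℕ) : ℂ) + 1 := by exact_mod_cast h.2.symm
      rw [this]; ring
    rw [this]; ring
  · simp only [h, if_false, mul_zero, zero_mul]

/-- `d'₀ u = (D₋ u, D₀ u)`. -/
noncomputable def d0' (L : ℕ) :
    ((Fin (L+1) × Fin (L+1)) → ℂ) →ₗ[ℂ]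
      ((Fin (L+1) × Fin (L+1)) → ℂ) × ((Fin (L+1) × Fin (L+1)) → ℂ) :=
  LinearMap.prod (DmW L) (D0W L)

/-- `d'₁ (u₁, u₂) = D₋ u₂ - D₀ u₁ - u₁`. -/
noncomputable def d1' (L : ℕ) :
    (((Fin (L+1) × Fin (L+1)) → ℂ) × ((Fin (L+1) × Fin (L+1)) → ℂ)) →ₗ[ℂ]
      ((Fin (L+1) × Fin (L+1)) → ℂ) :=
  (DmW L) ∘ₗ LinearMap.snd ℂ _ _ -
    (D0W L + LinearMap.id) ∘ₗ LinearMap.fst ℂ _ _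

noncomputable def GW (L : ℕ) :
    ((Fin (L+1) × Fin (L+1)) → ℂ) →ₗ[ℂ] ((Fin (L+1) × Fin (L+1)) → ℂ) :=
  D0W L + LinearMap.id

lemma GW_eq (L : ℕ) : GW L = Matrix.toLin' (Matrix.diagonal fun p => dfun L p + 1) :=
  D0W_add_id L

lemma d1'_apply (L : ℕ) (x) : d1' L x = DmW L x.2 - GW L x.1 := rfl

lemma d0'_apply (L : ℕ) (u) : d0' L u = (DmW L u, D0W L u) := rfl

/-- `ℓ ∈ 1/2 + ℤ₊` is a strict half-integer, i.e. `L = 2ℓ` is odd. -/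
theorem stmt_17 (L : ℕ) (hL : Odd L) :
    d1' L ∘ₗ d0' L = 0 ∧
    Function.Injective (d0' L) ∧
    Function.Surjective (d1' L) ∧
    LinearMap.ker (d1' L) = LinearMap.range (d0' L) := by
  have hEc := diag_inv_comp (dfun L) (dfun_ne L hL)
  have hFc := diag_inv_comp (fun p => dfun L p + 1) (dfun1_ne L hL)
  have hE1 : ∀ w, EW L (D0W L w) = w := fun w => by
    have := LinearMap.ext_iff.mp hEc.1 w; simpa [EW, D0W_eq] using this
  have hE2 : ∀ w, D0W L (EW L w) = w := fun w => by
    have := LinearMap.ext_iff.mp hEc.2 w; simpa [EW, D0W_eq] using this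
  have hF1 : ∀ w, FW L (GW L w) = w := fun w => by
    have := LinearMap.ext_iff.mp hFc.1 w; simpa [FW, GW_eq] using this
  have hF2 : ∀ w, GW L (FW L w) = w := fun w => by
    have := LinearMap.ext_iff.mp hFc.2 w; simpa [FW, GW_eq] using this
  have hc : ∀ w, DmW L (D0W L w) = GW L (DmW L w) := fun w =>
    LinearMap.ext_iff.mp (commDm L) w  -- GW defeq
  have hDE : ∀ w, DmW L (EW L w) = FW L (DmW L w) := fun w => by
    conv_lhs => rw [← hF1 (DmW L (EW L w))]
    rw [← hc, hE2]
  have hzero : d1' L ∘ₗ d0' L = 0 := by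
    ext u
    simp only [LinearMap.comp_apply, d0'_apply, d1'_apply, LinearMap.zero_apply]
    rw [hc]
    exact sub_self _
  refine ⟨hzero, ?_, ?_, ?_⟩
  · intro u v h
    have h2 : D0W L u = D0W L v := congrArg Prod.snd h
    calc u = EW L (D0W L u) := (hE1 u).symm
    _ = EW L (D0W L v) := by rw [h2]
    _ = v := hE1 v
  · intro v
    refine ⟨(-(FW L v), 0), ?_⟩
    rw [d1'_apply]
    simp only [map_zero, map_neg, hF2, zero_sub, neg_neg]
  · ext x
    simp only [LinearMap.mem_ker, LinearMap.mem_range]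
    constructor
    · intro h
      rw [d1'_apply, sub_eq_zero] at h
      refine ⟨EW L x.2, ?_⟩
      rw [d0'_apply, hE2, hDE, h, hF1]
    · rintro ⟨u, rfl⟩
      exact LinearMap.ext_iff.mp hzero u
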